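/- The function A_leak : (0, 1) → ℝ defined by A_leak(Λ) = (4/ln(1 − Λ)) · tanh( ln(1 − Λ)/4 ) is strictly decreasing on (0, 1), takes values in (0, 1), and satisfies A_leak(Λ) → 1 as Λ → 0⁺. Hence radiating a larger fraction of the input power strictly increases the waveguide-attenuation loss in DMA beamforming gain, and the loss vanishes in the limit of small fractional radiated power. -/

import Mathlib

open Real Set Filter

private lemma hasDerivAt_tanh' (x : ℝ) :
    HasDerivAt Real.tanh (1 / Real.cosh x ^ 2) x := by
  have h := (Real.hasDerivAt_sinh x).div (Real.hasDerivAt_cosh x) (Real.cosh_pos x).ne'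
  have hT : Real.tanh = fun y => Real.sinh y / Real.cosh y :=
    funext fun y => Real.tanh_eq_sinh_div_cosh y
  rw [hT]
  refine h.congr_deriv ?_
  have hc := Real.cosh_sq_sub_sinh_sq x
  have := (Real.cosh_pos x).ne'
  rw [div_left_inj' (pow_ne_zero 2 this)]
  nlinarith

private lemma continuous_tanh' : Continuous Real.tanh := by
  have hT : Real.tanh = fun y => Real.sinh y / Real.cosh y :=
    funext fun y => Real.tanh_eq_sinh_div_cosh y
  rw [hT]
  exact Real.continuous_sinh.div Real.continuous_cosh fun x => (Real.cosh_pos x).ne'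

private lemma tanh_lt_self {t : ℝ} (ht : 0 < t) : Real.tanh t < t := by
  have H : StrictMonoOn (fun t => t - Real.tanh t) (Set.Ici (0 : ℝ)) := by
    apply strictMonoOn_of_deriv_pos (convex_Ici 0)
    · exact (continuous_id.sub continuous_tanh').continuousOn
    · intro x hx
      rw [interior_Ici] at hx
      have hd : HasDerivAt (fun t => t - Real.tanh t) (1 - 1 / Real.cosh x ^ 2) x :=
        (hasDerivAt_id x).sub (hasDerivAt_tanh' x)
      rw [hd.deriv]
      have h1 : (1 : ℝ) < Real.cosh x := Real.one_lt_cosh.mpr (ne_of_gt hx)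
      have h2 : (1 : ℝ) < Real.cosh x ^ 2 := by nlinarith
      have : 1 / Real.cosh x ^ 2 < 1 := by
        rw [div_lt_one (by positivity)]; exact h2
      linarith
  have := H (Set.self_mem_Ici) (Set.mem_Ici.mpr ht.le) ht
  simpa [Real.tanh_zero] using this

private lemma tanh_pos' {t : ℝ} (ht : 0 < t) : 0 < Real.tanh t := by
  rw [Real.tanh_eq_sinh_div_cosh]
  exact div_pos (by rwa [Real.sinh_pos_iff]) (Real.cosh_pos t)

private lemma g_strictAnti : StrictAntiOn (fun t : ℝ => Real.tanh t / t) (Set.Ioi 0) := by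
  apply strictAntiOn_of_deriv_neg (convex_Ioi 0)
  · exact continuous_tanh'.continuousOn.div continuousOn_id
      (fun x hx => ne_of_gt hx)
  · intro x hx
    rw [interior_Ioi] at hx
    have hd : HasDerivAt (fun t : ℝ => Real.tanh t / t)
        ((1 / Real.cosh x ^ 2 * x - Real.tanh x * 1) / x ^ 2) x :=
      (hasDerivAt_tanh' x).div (hasDerivAt_id x) (ne_of_gt hx)
    rw [hd.deriv]
    apply div_neg_of_neg_of_pos _ (pow_pos hx 2)
    have hx1 : x < Real.sinh x := Real.self_lt_sinh_iff.mpr hx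
    have hc1 : (1 : ℝ) < Real.cosh x := Real.one_lt_cosh.mpr (ne_of_gt hx)
    have hcp : (0 : ℝ) < Real.cosh x := Real.cosh_pos x
    have key : x < Real.sinh x * Real.cosh x := by nlinarith [Real.sinh_pos_iff.mpr hx]
    rw [Real.tanh_eq_sinh_div_cosh]
    rw [sub_neg, div_mul_eq_mul_div, mul_one, div_lt_div_iff₀ (by positivity) hcp]
    nlinarith

private lemma f_eq {Λ : ℝ} (h : Λ ∈ Set.Ioo (0:ℝ) 1) :
    (4 / Real.log (1 - Λ)) * Real.tanh (Real.log (1 - Λ) / 4)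
      = Real.tanh (-(Real.log (1 - Λ)) / 4) / (-(Real.log (1 - Λ)) / 4) := by
  obtain ⟨h0, h1⟩ := h
  have hL : Real.log (1 - Λ) < 0 := Real.log_neg (by linarith) (by linarith)
  rw [show -(Real.log (1 - Λ)) / 4 = -(Real.log (1 - Λ) / 4) by ring, Real.tanh_neg]
  field_simp

private lemma s_pos {Λ : ℝ} (h : Λ ∈ Set.Ioo (0:ℝ) 1) : 0 < -(Real.log (1 - Λ)) / 4 := by
  obtain ⟨h0, h1⟩ := h
  have hL : Real.log (1 - Λ) < 0 := Real.log_neg (by linarith) (by linarith)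
  linarith

/-- The function `A_leak(Λ) = (4/ln(1-Λ)) tanh (ln(1-Λ)/4)` is strictly decreasing on `(0,1)`,
takes values in `(0,1)`, and tends to `1` as `Λ → 0⁺`. -/
theorem stmt14 :
    StrictAntiOn (fun Λ : ℝ => (4 / Real.log (1 - Λ)) * Real.tanh (Real.log (1 - Λ) / 4))
      (Set.Ioo 0 1) ∧
    (∀ Λ ∈ Set.Ioo (0 : ℝ) 1,
      (4 / Real.log (1 - Λ)) * Real.tanh (Real.log (1 - Λ) / 4) ∈ Set.Ioo (0 : ℝ) 1) ∧
    Filter.Tendsto (fun Λ : ℝ => (4 / Real.log (1 - Λ)) * Real.tanh (Real.log (1 - Λ) / 4))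
      (nhdsWithin 0 (Set.Ioi 0)) (nhds 1) := by
  refine ⟨?_, ?_, ?_⟩
  · -- strict anti
    intro x hx y hy hxy
    simp only [f_eq hx, f_eq hy]
    have hsx := s_pos hx
    have hsy := s_pos hy
    have hlog : Real.log (1 - y) < Real.log (1 - x) :=
      Real.log_lt_log (by linarith [hy.2]) (by linarith)
    exact g_strictAnti hsx hsy (by linarith)
  · -- membership
    intro Λ hΛ
    rw [f_eq hΛ]
    have hs := s_pos hΛ
    constructor
    · exact div_pos (tanh_pos' hs) hs
    · rw [div_lt_one hs]
      exact tanh_lt_self hs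
  · -- limit
    have hderiv : HasDerivAt Real.tanh 1 0 := by
      have := hasDerivAt_tanh' 0
      simpa using this
    have hslope : Filter.Tendsto (slope Real.tanh 0) (nhdsWithin 0 {(0:ℝ)}ᶜ) (nhds 1) :=
      hasDerivAt_iff_tendsto_slope.mp hderiv
    have hslope_eq : slope Real.tanh 0 = fun t : ℝ => Real.tanh t / t := by
      funext t; simp [slope_def_field, Real.tanh_zero, div_eq_mul_inv]
    rw [hslope_eq] at hslope
    -- u Λ = -(log (1-Λ))/4 tends to 0 within {≠0}
    have hu : Filter.Tendsto (fun Λ : ℝ => -(Real.log (1 - Λ)) / 4)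
        (nhdsWithin 0 (Set.Ioi 0)) (nhdsWithin 0 {(0:ℝ)}ᶜ) := by
      apply tendsto_nhdsWithin_of_tendsto_nhds_of_eventually_within
      · have hc : ContinuousAt (fun Λ : ℝ => -(Real.log (1 - Λ)) / 4) 0 := by
          have : ContinuousAt (fun Λ : ℝ => Real.log (1 - Λ)) 0 :=
            (Real.continuousAt_log (by norm_num)).comp
              (continuousAt_const.sub continuousAt_id)
          exact (this.neg).div_const 4
        have h0 : Filter.Tendsto (fun Λ : ℝ => -(Real.log (1 - Λ)) / 4) (nhds 0) (nhds 0) := by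
          simpa using hc.tendsto
        exact h0.mono_left nhdsWithin_le_nhds
      · filter_upwards [Ioo_mem_nhdsGT_of_mem (by norm_num : (0:ℝ) ∈ Set.Ico 0 1)]
          with Λ hΛ
        exact ne_of_gt (s_pos hΛ)
    have := hslope.comp hu
    apply this.congr'
    filter_upwards [Ioo_mem_nhdsGT_of_mem (by norm_num : (0:ℝ) ∈ Set.Ico 0 1)] with Λ hΛ
    exact (f_eq hΛ).symm
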